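/- For every fixed p ∈ ℕ₀ there exist constants c, C > 0 such that for all odd m ∈ ℕ₀: c·m^{1/4 − p/2} ≤ m!!/√((m+p)!) ≤ C·m^{1/4 − p/2}. -/
import Mathlib


noncomputable section

/-- The double factorial on natural numbers. -/
def dfacNat : ℕ → ℕ
  | 0 => 1
  | 1 => 1
  | (n + 2) => (n + 2) * dfacNat n

lemma dfac_step (n : ℕ) : dfacNat (n + 2) = (n + 2) * dfacNat n := rfl

lemma dfac_upper (k : ℕ) :
    (dfacNat (2*k+1))^4 ≤ ((2*k+1).factorial)^2 * (2*k+1) := by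
  induction k with
  | zero => simp [dfacNat]
  | succ k ih =>
    have h1 : dfacNat (2*(k+1)+1) = (2*k+3) * dfacNat (2*k+1) := by
      have : 2*(k+1)+1 = (2*k+1) + 2 := by ring
      rw [this, dfac_step]
    have h2 : (2*(k+1)+1).factorial = (2*k+3) * ((2*k+2) * (2*k+1).factorial) := by
      have : 2*(k+1)+1 = (2*k+2) + 1 := by ring
      rw [this, Nat.factorial_succ, Nat.factorial_succ]
    rw [h1, h2]
    have key : (2*k+3) * (2*k+1) ≤ (2*k+2)^2 := by nlinarith
    calc ((2*k+3) * dfacNat (2*k+1))^4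
        = (2*k+3)^4 * (dfacNat (2*k+1))^4 := by ring
      _ ≤ (2*k+3)^4 * (((2*k+1).factorial)^2 * (2*k+1)) := Nat.mul_le_mul_left _ ih
      _ = (2*k+3)^3 * ((2*k+3)*(2*k+1)) * ((2*k+1).factorial)^2 := by ring
      _ ≤ (2*k+3)^3 * ((2*k+2)^2) * ((2*k+1).factorial)^2 := by
          exact Nat.mul_le_mul_right _ (Nat.mul_le_mul_left _ key)
      _ = ((2*k+3) * ((2*k+2) * (2*k+1).factorial))^2 * (2*(k+1)+1) := by ring

lemma dfac_lower (k : ℕ) :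
    ((2*k+1).factorial)^2 * (2*k+2) ≤ 2 * (dfacNat (2*k+1))^4 := by
  induction k with
  | zero => simp [dfacNat]
  | succ k ih =>
    have h1 : dfacNat (2*(k+1)+1) = (2*k+3) * dfacNat (2*k+1) := by
      have : 2*(k+1)+1 = (2*k+1) + 2 := by ring
      rw [this, dfac_step]
    have h2 : (2*(k+1)+1).factorial = (2*k+3) * ((2*k+2) * (2*k+1).factorial) := by
      have : 2*(k+1)+1 = (2*k+2) + 1 := by ring
      rw [this, Nat.factorial_succ, Nat.factorial_succ]
    rw [h1, h2]
    have key : (2*k+2) * (2*k+4) ≤ (2*k+3)^2 := by nlinarith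
    calc ((2*k+3) * ((2*k+2) * (2*k+1).factorial))^2 * (2*(k+1)+2)
        = (2*k+3)^2 * ((2*k+2)*(2*k+4)) * (((2*k+1).factorial)^2 * (2*k+2)) := by ring
      _ ≤ (2*k+3)^2 * ((2*k+3)^2) * (((2*k+1).factorial)^2 * (2*k+2)) :=
          Nat.mul_le_mul_right _ (Nat.mul_le_mul_left _ key)
      _ ≤ (2*k+3)^2 * ((2*k+3)^2) * (2 * (dfacNat (2*k+1))^4) :=
          Nat.mul_le_mul_left _ ih
      _ = 2 * ((2*k+3) * dfacNat (2*k+1))^4 := by ring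

lemma fact_add_lower (m p : ℕ) (hm : 1 ≤ m) : m.factorial * m^p ≤ (m+p).factorial := by
  induction p with
  | zero => simp
  | succ p ih =>
    have e : m + (p+1) = (m+p) + 1 := by ring
    rw [e, Nat.factorial_succ, pow_succ]
    calc m.factorial * (m^p * m) = (m.factorial * m^p) * m := by ring
      _ ≤ (m+p).factorial * m := Nat.mul_le_mul_right _ ih
      _ ≤ (m+p).factorial * (m+p+1) := Nat.mul_le_mul_left _ (by omega)
      _ = (m+p+1) * (m+p).factorial := by ring

lemma fact_add_upper (m p : ℕ) (hm : 1 ≤ m) :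
    (m+p).factorial ≤ m.factorial * (m*(p+1))^p := by
  induction p with
  | zero => simp
  | succ p ih =>
    have e : m + (p+1) = (m+p) + 1 := by ring
    rw [e, Nat.factorial_succ, pow_succ]
    have h1 : m + p + 1 ≤ m * (p+2) := by nlinarith
    calc (m+p+1) * (m+p).factorial ≤ (m*(p+2)) * (m.factorial * (m*(p+1))^p) :=
          Nat.mul_le_mul h1 ih
      _ ≤ (m*(p+2)) * (m.factorial * (m*(p+2))^p) := by
          refine Nat.mul_le_mul_left _ (Nat.mul_le_mul_left _ (Nat.pow_le_pow_left ?_ p))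
          exact Nat.mul_le_mul_left _ (by omega)
      _ = m.factorial * ((m*(p+2))^p * (m*(p+2))) := by ring

lemma key_upper (p k : ℕ) :
    (dfacNat (2*k+1))^4 * ((2*k+1)^p)^2 ≤ (2*k+1) * (((2*k+1)+p).factorial)^2 := by
  set m := 2*k+1 with hm
  have h1 : (dfacNat m)^4 ≤ (m.factorial)^2 * m := dfac_upper k
  have h2 : m.factorial * m^p ≤ (m+p).factorial := fact_add_lower m p (by omega)
  calc (dfacNat m)^4 * (m^p)^2 ≤ ((m.factorial)^2 * m) * (m^p)^2 :=
        Nat.mul_le_mul_right _ h1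
    _ = m * (m.factorial * m^p)^2 := by ring
    _ ≤ m * ((m+p).factorial)^2 := Nat.mul_le_mul_left _ (Nat.pow_le_pow_left h2 2)

lemma key_lower (p k : ℕ) :
    (2*k+1) * (((2*k+1)+p).factorial)^2
      ≤ 2 * (p+1)^(2*p) * ((dfacNat (2*k+1))^4 * ((2*k+1)^p)^2) := by
  set m := 2*k+1 with hm
  have h1 : (m.factorial)^2 * m ≤ 2 * (dfacNat m)^4 := by
    have := dfac_lower k
    calc (m.factorial)^2 * m ≤ (m.factorial)^2 * (2*k+2) :=
          Nat.mul_le_mul_left _ (by omega)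
      _ ≤ 2 * (dfacNat m)^4 := this
  have h2 : (m+p).factorial ≤ m.factorial * (m*(p+1))^p := fact_add_upper m p (by omega)
  have e : (p+1)^(2*p) = ((p+1)^p)^2 := by rw [← pow_mul, mul_comm]
  calc m * ((m+p).factorial)^2 ≤ m * (m.factorial * (m*(p+1))^p)^2 :=
        Nat.mul_le_mul_left _ (Nat.pow_le_pow_left h2 2)
    _ = m * (m.factorial * (m^p * (p+1)^p))^2 := by rw [mul_pow m (p+1) p]
    _ = ((m.factorial)^2 * m) * (((p+1)^p)^2 * (m^p)^2) := by ring
    _ ≤ (2 * (dfacNat m)^4) * (((p+1)^p)^2 * (m^p)^2) := Nat.mul_le_mul_right _ h1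
    _ = 2 * ((p+1)^p)^2 * ((dfacNat m)^4 * (m^p)^2) := by ring
    _ = 2 * (p+1)^(2*p) * ((dfacNat m)^4 * (m^p)^2) := by rw [e]

lemma rpow_pow4 (m p : ℕ) (hm : 1 ≤ m) :
    ((m:ℝ) ^ ((1:ℝ)/4 - (p:ℝ)/2))^4 = (m:ℝ) / (((m:ℝ)^p)^2) := by
  have hm0 : (0:ℝ) < m := by exact_mod_cast hm
  rw [← Real.rpow_natCast ((m:ℝ) ^ ((1:ℝ)/4 - (p:ℝ)/2)) 4, ← Real.rpow_mul hm0.le]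
  have e : ((1:ℝ)/4 - (p:ℝ)/2) * (4:ℕ) = 1 - 2*p := by push_cast; ring
  rw [e, Real.rpow_sub hm0, Real.rpow_one]
  congr 1
  rw [← pow_mul, ← Real.rpow_natCast (m:ℝ) (p*2)]
  congr 1
  push_cast; ring


/-- for fixed `p`, `m!!/√((m+p)!) = Θ(m^{1/4 − p/2})` over odd `m`. -/
theorem dfac_div_sqrt_factorial_asymptotics (p : ℕ) :
    ∃ c C : ℝ, 0 < c ∧ 0 < C ∧ ∀ m : ℕ, Odd m →
      c * (m : ℝ) ^ ((1 : ℝ) / 4 - (p : ℝ) / 2)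
          ≤ (dfacNat m : ℝ) / Real.sqrt ((m + p).factorial) ∧
      (dfacNat m : ℝ) / Real.sqrt ((m + p).factorial)
          ≤ C * (m : ℝ) ^ ((1 : ℝ) / 4 - (p : ℝ) / 2) := by
  set y : ℝ := 1 / (2 * ((p:ℝ)+1)^(2*p)) with hy
  have hy0 : 0 < y := by positivity
  refine ⟨y ^ ((1:ℝ)/4), 1, Real.rpow_pos_of_pos hy0 _, one_pos, ?_⟩
  intro m hm
  obtain ⟨k, hk⟩ := hm
  have hkm : m = 2*k+1 := by omega
  have hm1 : 1 ≤ m := by omega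
  have hm0 : (0:ℝ) < m := by exact_mod_cast hm1
  set F : ℝ := (dfacNat m : ℝ) with hF
  set K : ℝ := ((m+p).factorial : ℝ) with hK
  have hK0 : (0:ℝ) < K := by rw [hK]; exact_mod_cast (m+p).factorial_pos
  have hF0 : (0:ℝ) ≤ F := by positivity
  set x : ℝ := (m:ℝ) ^ ((1:ℝ)/4 - (p:ℝ)/2) with hx
  have hx0 : (0:ℝ) ≤ x := Real.rpow_nonneg hm0.le _
  have hx4 : x^4 = (m:ℝ) / (((m:ℝ)^p)^2) := rpow_pow4 m p hm1
  set f : ℝ := F / Real.sqrt K with hf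
  have hf0 : (0:ℝ) ≤ f := by positivity
  have hsq : (Real.sqrt K)^4 = K^2 := by
    rw [show (4:ℕ) = 2*2 by rfl, pow_mul, Real.sq_sqrt hK0.le]
  have hf4 : f^4 = F^4 / K^2 := by rw [hf, div_pow, hsq]
  have hmp0 : (0:ℝ) < ((m:ℝ)^p)^2 := by positivity
  have hc4 : (y ^ ((1:ℝ)/4))^4 = y := by
    rw [← Real.rpow_natCast (y ^ ((1:ℝ)/4)) 4, ← Real.rpow_mul hy0.le]
    norm_num
  constructor
  · -- lower bound
    rw [← pow_le_pow_iff_left₀ (by positivity) hf0 (by norm_num : (4:ℕ) ≠ 0)]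
    rw [mul_pow, hc4, hx4, hf4, hy]
    rw [div_mul_div_comm, one_mul, div_le_div_iff₀ (by positivity) (by positivity)]
    have hnat := key_lower p k
    rw [← hkm] at hnat
    have hr : ((m:ℝ)) * (((m+p).factorial : ℕ):ℝ)^2
        ≤ 2 * ((p:ℝ)+1)^(2*p) * (((dfacNat m : ℕ):ℝ)^4 * ((m:ℝ)^p)^2) := by
      exact_mod_cast hnat
    rw [hF, hK]
    exact hr.trans_eq (by ring)
  · -- upper bound
    rw [one_mul, ← pow_le_pow_iff_left₀ hf0 hx0 (by norm_num : (4:ℕ) ≠ 0)]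
    rw [hx4, hf4, div_le_div_iff₀ (by positivity) hmp0]
    have hnat := key_upper p k
    rw [← hkm] at hnat
    rw [hF, hK]
    exact_mod_cast hnat
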